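/- If G is a connected non-complete block graph of order n ≥ 2, then the Δ-convex cover number φ_c(G) equals 2. -/

import Mathlib

variable {V : Type*}

/-- A set `S` is Δ-convex: no vertex outside `S` is adjacent to two adjacent vertices of `S`. -/
def DeltaConvex (G : SimpleGraph V) (S : Set V) : Prop :=
  ∀ ⦃u v w : V⦄, u ∈ S → v ∈ S → G.Adj u v → G.Adj w u → G.Adj w v → w ∈ S

/-- The Δ-convex hull of `S`: the smallest Δ-convex set containing `S`. -/
def DeltaHull (G : SimpleGraph V) (S : Set V) : Set V :=
  ⋂₀ {T | DeltaConvex G T ∧ S ⊆ T}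

/-- A Δ-convex `p`-cover. -/
def IsDeltaCover (G : SimpleGraph V) {p : ℕ} (F : Fin p → Set V) : Prop :=
  (∀ i, DeltaConvex G (F i)) ∧ (⋃ i, F i) = Set.univ ∧
    ∀ i, ¬ F i ⊆ ⋃ j ∈ ({i}ᶜ : Set (Fin p)), F j

/-- A Δ-convex `p`-partition. -/
def IsDeltaPartition (G : SimpleGraph V) {p : ℕ} (F : Fin p → Set V) : Prop :=
  (∀ i, DeltaConvex G (F i)) ∧ (⋃ i, F i) = Set.univ ∧
    (∀ i, (F i).Nonempty) ∧ ∀ i j, i ≠ j → Disjoint (F i) (F j)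

/-- The Δ-convex cover number `φ_c(G)`. -/
noncomputable def coverNumber (G : SimpleGraph V) : ℕ :=
  sInf {p | 2 ≤ p ∧ ∃ F : Fin p → Set V, IsDeltaCover G F}

/-- The Δ-convex partition number `Θ_c(G)`. -/
noncomputable def partitionNumber (G : SimpleGraph V) : ℕ :=
  sInf {p | 2 ≤ p ∧ ∃ F : Fin p → Set V, IsDeltaPartition G F}

/-- A vertex is Δ-extreme iff it lies in no triangle (this characterization is used directly). -/
def DeltaExtreme (G : SimpleGraph V) (u : V) : Prop :=
  ∀ v w : V, ¬ (G.Adj u v ∧ G.Adj u w ∧ G.Adj v w)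

/-- `B` induces a maximal 2-connected (or edge) subgraph candidate: `B` has at least two
vertices, induces a connected subgraph, and removing any single vertex keeps it connected. -/
def IsBiconnectedSet (G : SimpleGraph V) (B : Set V) : Prop :=
  2 ≤ B.ncard ∧ (G.induce B).Connected ∧
    ∀ v ∈ B, (G.induce (B \ {v})).Connected

/-- A block of `G`: a maximal biconnected set. -/
def IsBlock (G : SimpleGraph V) (B : Set V) : Prop :=
  IsBiconnectedSet G B ∧ ∀ B' : Set V, IsBiconnectedSet G B' → B ⊆ B' → B = B'

open SimpleGraph Walk

section helpers
variable {G : SimpleGraph V}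

lemma reach_induce {S : Set V} : ∀ {u v : V} (w : G.Walk u v), (∀ x ∈ w.support, x ∈ S) →
    ∀ (hu : u ∈ S) (hv : v ∈ S), (G.induce S).Reachable ⟨u, hu⟩ ⟨v, hv⟩ := by
  intro u v w
  induction w with
  | nil => intro _ hu hv; exact Reachable.refl _
  | @cons a b v' h' w' ih =>
    intro hsup hu hv
    have hx : b ∈ S := hsup b (by simp)
    have hadj : (G.induce S).Adj ⟨a, hu⟩ ⟨b, hx⟩ := h'
    exact hadj.reachable.trans (ih (fun y hy => hsup y (by simp [hy])) hx hv)

lemma induce_connected_of_center {S : Set V} {c : V} (hc : c ∈ S)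
    (h : ∀ u ∈ S, ∃ w : G.Walk u c, ∀ x ∈ w.support, x ∈ S) :
    (G.induce S).Connected := by
  rw [SimpleGraph.connected_iff]
  refine ⟨fun x y => ?_, ⟨⟨c, hc⟩⟩⟩
  obtain ⟨wx, hwx⟩ := h x.1 x.2
  obtain ⟨wy, hwy⟩ := h y.1 y.2
  exact (reach_induce wx hwx x.2 hc).trans (reach_induce wy hwy y.2 hc).symm

variable [DecidableEq V]

lemma end_not_mem_takeUntil {u v w : V} {p : G.Walk u v} (hp : p.IsPath)
    (hw : w ∈ p.support) (hne : w ≠ v) : v ∉ (p.takeUntil w hw).support := by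
  intro hv
  have hnd : p.support.Nodup := hp.support_nodup
  rw [← p.take_spec hw, Walk.support_append] at hnd
  have hdis := List.disjoint_of_nodup_append hnd
  have hv2 : v ∈ (p.dropUntil w hw).support.tail := by
    have h1 : v ∈ (p.dropUntil w hw).support := Walk.end_mem_support _
    rw [Walk.support_eq_cons] at h1
    rcases List.mem_cons.mp h1 with h1 | h1
    · exact absurd h1.symm hne
    · exact h1
  exact hdis hv hv2

lemma start_not_mem_dropUntil {u v w : V} {p : G.Walk u v} (hp : p.IsPath)
    (hw : w ∈ p.support) (hne : w ≠ u) : u ∉ (p.dropUntil w hw).support := by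
  intro hu
  have hnd : p.support.Nodup := hp.support_nodup
  rw [← p.take_spec hw, Walk.support_append] at hnd
  have hdis := List.disjoint_of_nodup_append hnd
  have hu2 : u ∈ (p.dropUntil w hw).support.tail := by
    rw [Walk.support_eq_cons] at hu
    rcases List.mem_cons.mp hu with h1 | h1
    · exact absurd h1.symm hne
    · exact h1
  exact hdis (Walk.start_mem_support _) hu2

end helpers

lemma exists_block_superset_aux [Fintype V] (G : SimpleGraph V) :
    ∀ (k : ℕ) (S : Set V), Fintype.card V - S.ncard ≤ k → IsBiconnectedSet G S →
      ∃ B, IsBlock G B ∧ S ⊆ B := by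
  intro k
  induction k with
  | zero =>
    intro S hle hS
    refine ⟨S, ⟨hS, fun B' hB' hSB' => ?_⟩, subset_rfl⟩
    by_contra hne
    have h1 : S.ncard < B'.ncard :=
      Set.ncard_lt_ncard (hSB'.ssubset_of_ne hne) (Set.toFinite B')
    have h2 : B'.ncard ≤ Fintype.card V := by
      simpa [Set.ncard_univ, Nat.card_eq_fintype_card] using
        Set.ncard_le_ncard (Set.subset_univ B') Set.finite_univ
    omega
  | succ k ih =>
    intro S hle hS
    by_cases hmax : ∀ B', IsBiconnectedSet G B' → S ⊆ B' → S = B'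
    · exact ⟨S, ⟨hS, hmax⟩, subset_rfl⟩
    · push_neg at hmax
      obtain ⟨B', hB', hSB', hne⟩ := hmax
      have h1 : S.ncard < B'.ncard :=
        Set.ncard_lt_ncard (hSB'.ssubset_of_ne hne) (Set.toFinite B')
      obtain ⟨B, hB, h2⟩ := ih B' (by omega) hB'
      exact ⟨B, hB, hSB'.trans h2⟩

lemma exists_block_superset [Fintype V] (G : SimpleGraph V) {S : Set V}
    (hS : IsBiconnectedSet G S) : ∃ B, IsBlock G B ∧ S ⊆ B :=
  exists_block_superset_aux G (Fintype.card V) S (by omega) hS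

lemma no_walk [Fintype V] [DecidableEq V] (G : SimpleGraph V)
    (hblock : ∀ B : Set V, IsBlock G B → ∀ u ∈ B, ∀ v ∈ B, u ≠ v → G.Adj u v)
    {a b c : V} (hne : a ≠ b) (hab : ¬ G.Adj a b)
    (hac : G.Adj a c) (hcb : G.Adj c b)
    (w : G.Walk a b) (hw : c ∉ w.support) : False := by
  set p : G.Walk a b := (w.toPath : G.Walk a b) with hpdef
  have hpath : p.IsPath := w.toPath.2
  have hcp : c ∉ p.support := fun h => hw (Walk.support_toPath_subset w h)
  set S : Set V := insert c {x | x ∈ p.support} with hSdef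
  have hcS : c ∈ S := Set.mem_insert _ _
  have haS : a ∈ S := Set.mem_insert_of_mem _ p.start_mem_support
  have hbS : b ∈ S := Set.mem_insert_of_mem _ p.end_mem_support
  have hbic : IsBiconnectedSet G S := by
    refine ⟨?_, ?_, ?_⟩
    · have hsub : ({a, b} : Set V) ⊆ S := by
        intro x hx
        rcases hx with rfl | hx
        · exact haS
        · exact Set.mem_singleton_iff.mp hx ▸ hbS
      calc 2 = ({a, b} : Set V).ncard := (Set.ncard_pair hne).symm
        _ ≤ S.ncard := Set.ncard_le_ncard hsub (Set.toFinite S)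
    · apply induce_connected_of_center hcS
      intro u hu
      rcases Set.mem_insert_iff.mp hu with rfl | hu
      · exact ⟨Walk.nil, by intro x hx; simp at hx; exact hx ▸ hcS⟩
      · refine ⟨(p.dropUntil u hu).append (Walk.cons hcb.symm Walk.nil), ?_⟩
        intro x hx
        rw [Walk.support_append] at hx
        rcases List.mem_append.mp hx with hx | hx
        · exact Set.mem_insert_of_mem _ (Walk.support_dropUntil_subset _ _ hx)
        · simp at hx; exact hx ▸ hcS
    · intro v hv
      rcases Set.mem_insert_iff.mp hv with rfl | hv
      · have hSeq : S \ {v} = {x | x ∈ p.support} := by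
          ext x
          simp only [hSdef, Set.mem_diff, Set.mem_insert_iff, Set.mem_singleton_iff,
            Set.mem_setOf_eq]
          constructor
          · rintro ⟨h1 | h1, h2⟩
            · exact absurd h1 h2
            · exact h1
          · intro h1
            exact ⟨Or.inr h1, fun h => hcp (h ▸ h1)⟩
        rw [hSeq]
        apply induce_connected_of_center (S := {x | x ∈ p.support}) (c := a) p.start_mem_support
        intro u hu
        refine ⟨(p.takeUntil u hu).reverse, ?_⟩
        intro x hx
        rw [Walk.support_reverse, List.mem_reverse] at hx
        exact Walk.support_takeUntil_subset p hu hx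
      · have hvc : v ≠ c := fun h => hcp (h ▸ hv)
        have hcS' : c ∈ S \ {v} := ⟨hcS, by simp [hvc.symm]⟩
        apply induce_connected_of_center hcS'
        intro u hu
        obtain ⟨huS, huv'⟩ := hu
        have huv : u ≠ v := by simpa using huv'
        rcases Set.mem_insert_iff.mp huS with rfl | hup
        · exact ⟨Walk.nil, by intro x hx; simp at hx; exact hx ▸ hcS'⟩
        · have hsplit : u ∈ (p.takeUntil v hv).support ∨ u ∈ (p.dropUntil v hv).support := by
            rw [← Walk.mem_support_append_iff, Walk.take_spec]
            exact hup
          rcases hsplit with hu1 | hu2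
          · have hqpath : (p.takeUntil v hv).IsPath := hpath.takeUntil hv
            have hvq : v ∉ ((p.takeUntil v hv).takeUntil u hu1).support :=
              end_not_mem_takeUntil hqpath hu1 huv
            refine ⟨(((p.takeUntil v hv).takeUntil u hu1).reverse).append
              (Walk.cons hac Walk.nil), ?_⟩
            intro x hx
            rw [Walk.support_append] at hx
            rcases List.mem_append.mp hx with hx | hx
            · rw [Walk.support_reverse, List.mem_reverse] at hx
              refine ⟨Set.mem_insert_of_mem _
                (Walk.support_takeUntil_subset p hv (Walk.support_takeUntil_subset _ hu1 hx)), ?_⟩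
              simp only [Set.mem_singleton_iff]
              exact fun h => hvq (h ▸ hx)
            · simp at hx; exact hx ▸ hcS'
          · have hrpath : (p.dropUntil v hv).IsPath := hpath.dropUntil hv
            have hvr : v ∉ ((p.dropUntil v hv).dropUntil u hu2).support :=
              start_not_mem_dropUntil hrpath hu2 huv
            refine ⟨((p.dropUntil v hv).dropUntil u hu2).append
              (Walk.cons hcb.symm Walk.nil), ?_⟩
            intro x hx
            rw [Walk.support_append] at hx
            rcases List.mem_append.mp hx with hx | hx
            · refine ⟨Set.mem_insert_of_mem _
                (Walk.support_dropUntil_subset p hv (Walk.support_dropUntil_subset _ hu2 hx)), ?_⟩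
              simp only [Set.mem_singleton_iff]
              exact fun h => hvr (h ▸ hx)
            · simp at hx; exact hx ▸ hcS'
  obtain ⟨B, hB, hSB⟩ := exists_block_superset G hbic
  exact hab (hblock B hB a (hSB haS) b (hSB hbS) hne)

lemma exists_p3 {G : SimpleGraph V} : ∀ {u v : V} (w : G.Walk u v), u ≠ v → ¬ G.Adj u v →
    ∃ x y z : V, G.Adj x y ∧ G.Adj y z ∧ ¬ G.Adj x z ∧ x ≠ z := by
  intro u v w
  induction w with
  | nil => intro h _; exact absurd rfl h
  | @cons u x v h wt ih =>
    intro hne hnadj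
    by_cases hxv : G.Adj x v
    · exact ⟨u, x, v, h, hxv, hnadj, hne⟩
    · have hxv' : x ≠ v := by rintro rfl; exact hnadj h
      exact ih hxv' hxv

theorem stmt4 [Fintype V] (G : SimpleGraph V) (hconn : G.Connected)
    (hn : 2 ≤ Fintype.card V)
    (hblock : ∀ B : Set V, IsBlock G B → ∀ u ∈ B, ∀ v ∈ B, u ≠ v → G.Adj u v)
    (hnc : ∃ u v : V, u ≠ v ∧ ¬ G.Adj u v) :
    coverNumber G = 2 := by
  classical
  obtain ⟨u0, v0, hne0, hnadj0⟩ := hnc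
  obtain ⟨w0⟩ := hconn u0 v0
  obtain ⟨a, c, b, hac, hcb, hab, hne⟩ := exists_p3 w0 hne0 hnadj0
  set A : Set V := {v | ∃ w : G.Walk a v, c ∉ w.support} with hAdef
  have haA : a ∈ A := ⟨Walk.nil, by simp; exact fun h => hac.ne h.symm⟩
  have hcA : c ∉ A := fun ⟨w, hw⟩ => hw w.end_mem_support
  have hbA : b ∉ A := fun ⟨w, hw⟩ => no_walk G hblock hne hab hac hcb w hw
  have hext : ∀ z w : V, z ∈ A → G.Adj z w → w ≠ c → w ∈ A := by
    rintro z w ⟨wz, hwz⟩ hzw hwc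
    refine ⟨wz.concat hzw, ?_⟩
    intro hc
    rw [Walk.support_concat] at hc
    rcases List.mem_append.mp hc with h | h
    · exact hwz h
    · simp at h; exact hwc h.symm
  have hconvex1 : DeltaConvex G (A ∪ {c}) := by
    intro u v w hu hv huv hwu hwv
    by_cases hwc : w = c
    · exact Or.inr (by simp [hwc])
    · refine Or.inl ?_
      rcases hu with hu | hu
      · exact hext u w hu hwu.symm hwc
      · rcases hv with hv | hv
        · exact hext v w hv hwv.symm hwc
        · simp only [Set.mem_singleton_iff] at hu hv
          exact absurd (hu.trans hv.symm) huv.ne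
  have hconvex2 : DeltaConvex G Aᶜ := by
    intro u v w hu hv huv hwu hwv
    by_contra hw
    rw [Set.notMem_compl_iff] at hw
    have hu' : u = c := by
      by_contra h
      exact hu (hext w u hw hwu h)
    have hv' : v = c := by
      by_contra h
      exact hv (hext w v hw hwv h)
    exact huv.ne (hu'.trans hv'.symm)
  set F : Fin 2 → Set V := ![A ∪ {c}, Aᶜ] with hFdef
  have hF0 : F 0 = A ∪ {c} := rfl
  have hF1 : F 1 = Aᶜ := rfl
  have hcover : IsDeltaCover G F := by
    refine ⟨?_, ?_, ?_⟩
    · intro i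
      fin_cases i
      · exact hconvex1
      · exact hconvex2
    · ext x
      simp only [Set.mem_iUnion, Set.mem_univ, iff_true]
      by_cases hx : x ∈ A
      · exact ⟨0, Or.inl hx⟩
      · exact ⟨1, hx⟩
    · intro i hsub
      fin_cases i
      · have ha0 : a ∈ F 0 := Or.inl haA
        obtain ⟨j, hj, hmem⟩ := Set.mem_iUnion₂.mp (hsub ha0)
        fin_cases j
        · simp at hj
        · exact hmem haA
      · have hb1 : b ∈ F 1 := hbA
        obtain ⟨j, hj, hmem⟩ := Set.mem_iUnion₂.mp (hsub hb1)
        fin_cases j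
        · rcases hmem with h | h
          · exact hbA h
          · simp at h; exact hcb.ne' h
        · simp at hj
  have h2mem : 2 ∈ {p | 2 ≤ p ∧ ∃ F : Fin p → Set V, IsDeltaCover G F} :=
    ⟨le_refl 2, F, hcover⟩
  exact le_antisymm (Nat.sInf_le h2mem) (le_csInf ⟨2, h2mem⟩ fun x hx => hx.1)
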